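/- For probability vectors, the map t ↦ H(p^{(t)}) where p^{(t)}_i = p_i^t/∑_j p_j^t is nonincreasing in t on (0,∞); in particular for 0 < t < 1, H(p^{(t)}) ≥ H(p^{(1)}) = H(p). -/

import Mathlib

open Finset Real

/-- Gibbs' inequality: cross "sum" is at most entropy sum. -/
lemma gibbs_aux {m : ℕ} (q w : Fin m → ℝ) (hq : ∀ i, 0 < q i) (hw : ∀ i, 0 < w i)
    (hq1 : ∑ i, q i = 1) (hw1 : ∑ i, w i = 1) :
    ∑ i, q i * Real.log (w i) ≤ ∑ i, q i * Real.log (q i) := by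
  have h : ∀ i : Fin m, q i * Real.log (w i) - q i * Real.log (q i) ≤ w i - q i := by
    intro i
    have hlog := Real.log_le_sub_one_of_pos (div_pos (hw i) (hq i))
    have h2 : q i * Real.log (w i / q i) ≤ q i * (w i / q i - 1) :=
      mul_le_mul_of_nonneg_left hlog (hq i).le
    rw [Real.log_div (hw i).ne' (hq i).ne'] at h2
    have h3 : q i * (w i / q i - 1) = w i - q i := by
      field_simp [(hq i).ne']
    nlinarith [h2, h3]
  have hsum := Finset.sum_le_sum (fun i (_ : i ∈ Finset.univ) => h i)
  rw [Finset.sum_sub_distrib, Finset.sum_sub_distrib, hq1, hw1] at hsum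
  linarith

/-- Entropy of the `s`-escort distribution is at most entropy, for `s > 1`. -/
lemma escort_entropy_le {m : ℕ} (hm : 0 < m) (q : Fin m → ℝ) (hq : ∀ i, 0 < q i)
    (hq1 : ∑ i, q i = 1) (s : ℝ) (hs : 1 < s) :
    -∑ i, (q i ^ s / ∑ j, q j ^ s) * Real.log (q i ^ s / ∑ j, q j ^ s)
      ≤ -∑ i, q i * Real.log (q i) := by
  set Z := ∑ j, q j ^ s with hZdef
  have hZpos : 0 < Z :=
    Finset.sum_pos (fun j _ => Real.rpow_pos_of_pos (hq j) s) ⟨⟨0, hm⟩, Finset.mem_univ _⟩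
  set w : Fin m → ℝ := fun i => q i ^ s / Z with hwdef
  have hw : ∀ i, 0 < w i := fun i => div_pos (Real.rpow_pos_of_pos (hq i) s) hZpos
  have hw1 : ∑ i, w i = 1 := by
    rw [hwdef]
    rw [← Finset.sum_div, div_self hZpos.ne']
  have hlogw : ∀ i, Real.log (w i) = s * Real.log (q i) - Real.log Z := by
    intro i
    rw [hwdef]
    rw [Real.log_div (Real.rpow_pos_of_pos (hq i) s).ne' hZpos.ne', Real.log_rpow (hq i)]
  set Sq := ∑ i, q i * Real.log (q i) with hSq
  set Sw := ∑ i, w i * Real.log (w i) with hSwdef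
  set C2 := ∑ i, w i * Real.log (q i) with hC2
  have hSw : Sw = s * C2 - Real.log Z := by
    rw [hSwdef]
    calc ∑ i, w i * Real.log (w i)
        = ∑ i, (s * (w i * Real.log (q i)) - w i * Real.log Z) := by
          refine Finset.sum_congr rfl fun i _ => ?_
          rw [hlogw i]; ring
      _ = s * C2 - Real.log Z := by
          rw [Finset.sum_sub_distrib, ← Finset.mul_sum, ← Finset.sum_mul, hw1, one_mul, hC2]
  have hC1 : ∑ i, q i * Real.log (w i) = s * Sq - Real.log Z := by
    calc ∑ i, q i * Real.log (w i)
        = ∑ i, (s * (q i * Real.log (q i)) - q i * Real.log Z) := by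
          refine Finset.sum_congr rfl fun i _ => ?_
          rw [hlogw i]; ring
      _ = s * Sq - Real.log Z := by
          rw [Finset.sum_sub_distrib, ← Finset.mul_sum, ← Finset.sum_mul, hq1, one_mul, hSq]
  have g1 := gibbs_aux q w hq hw hq1 hw1
  have g2 := gibbs_aux w q hw hq hw1 hq1
  rw [hC1] at g1
  -- g1 : s * Sq - log Z ≤ Sq, so (s-1) * Sq ≤ log Z
  -- g2 : C2 ≤ Sw = s * C2 - log Z, so log Z ≤ (s-1) * C2
  have h1 : (s - 1) * Sq ≤ Real.log Z := by linarith
  have h2 : Real.log Z ≤ (s - 1) * C2 := by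
    have : C2 ≤ s * C2 - Real.log Z := by rw [← hSw]; exact g2
    linarith
  have hSqC2 : Sq ≤ C2 :=
    (mul_le_mul_iff_right₀ (by linarith : (0:ℝ) < s - 1)).mp (h1.trans h2)
  have : Sq ≤ Sw := by
    rw [hSw]; nlinarith
  linarith

theorem entropy_antitone_along_tempering {m : ℕ} (hm : 0 < m)
    (p : Fin m → ℝ) (hp : ∀ i, 0 < p i) (hp1 : ∑ i : Fin m, p i = 1)
    (pt : ℝ → Fin m → ℝ)
    (hpt : ∀ t i, pt t i = p i ^ t / ∑ j : Fin m, p j ^ t)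
    (H : (Fin m → ℝ) → ℝ)
    (hH : ∀ w, H w = -∑ i : Fin m, w i * Real.log (w i)) :
    (∀ t₁ t₂ : ℝ, 0 < t₁ → t₁ ≤ t₂ → H (pt t₂) ≤ H (pt t₁)) ∧
    ∀ t ∈ Set.Ioo (0 : ℝ) 1, H p ≤ H (pt t) := by
  have main : ∀ t₁ t₂ : ℝ, 0 < t₁ → t₁ ≤ t₂ → H (pt t₂) ≤ H (pt t₁) := by
    intro t₁ t₂ ht₁ h12
    rcases eq_or_lt_of_le h12 with rfl | hlt
    · exact le_refl _
    set s := t₂ / t₁ with hsdef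
    have hs : 1 < s := (one_lt_div ht₁).mpr hlt
    set Z₁ := ∑ j : Fin m, p j ^ t₁ with hZ₁
    have hZ₁pos : 0 < Z₁ :=
      Finset.sum_pos (fun j _ => Real.rpow_pos_of_pos (hp j) t₁) ⟨⟨0, hm⟩, Finset.mem_univ _⟩
    set q : Fin m → ℝ := pt t₁ with hqdef
    have hqpos : ∀ i, 0 < q i := by
      intro i; rw [hqdef, hpt]
      exact div_pos (Real.rpow_pos_of_pos (hp i) t₁) hZ₁pos
    have hq1 : ∑ i, q i = 1 := by
      rw [hqdef]
      have : ∑ i, pt t₁ i = ∑ i, p i ^ t₁ / Z₁ :=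
        Finset.sum_congr rfl fun i _ => by rw [hpt]
      rw [this, ← Finset.sum_div, div_self hZ₁pos.ne']
    have hqs : ∀ i, q i ^ s = p i ^ t₂ / Z₁ ^ s := by
      intro i
      rw [hqdef, hpt, Real.div_rpow (Real.rpow_nonneg (hp i).le t₁) hZ₁pos.le,
        ← Real.rpow_mul (hp i).le]
      congr 2
      rw [hsdef]; field_simp [ht₁.ne']
    have hptt₂ : ∀ i, pt t₂ i = q i ^ s / ∑ j, q j ^ s := by
      intro i
      have hsum : ∑ j, q j ^ s = (∑ j : Fin m, p j ^ t₂) / Z₁ ^ s := by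
        rw [Finset.sum_congr rfl fun j _ => hqs j, Finset.sum_div]
      have hZ₂pos : 0 < ∑ j : Fin m, p j ^ t₂ :=
        Finset.sum_pos (fun j _ => Real.rpow_pos_of_pos (hp j) t₂) ⟨⟨0, hm⟩, Finset.mem_univ _⟩
      rw [hpt, hqs i, hsum]
      have hC : Z₁ ^ s ≠ 0 := (Real.rpow_pos_of_pos hZ₁pos s).ne'
      field_simp
    have key := escort_entropy_le hm q hqpos hq1 s hs
    have e2 : H (pt t₂) = -∑ i, (q i ^ s / ∑ j, q j ^ s) * Real.log (q i ^ s / ∑ j, q j ^ s) := by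
      rw [hH]
      congr 1
      exact Finset.sum_congr rfl fun i _ => by rw [hptt₂ i]
    rw [e2, hH]
    exact key
  constructor
  · exact main
  · intro t ht
    have hpt1 : pt 1 = p := by
      funext i
      rw [hpt]
      simp [Real.rpow_one, hp1]
    have := main t 1 ht.1 ht.2.le
    rwa [hpt1] at this
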